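/- Let T = (V,E) be a tree on d ≥ 3 vertices with edge correlations ρ : E → (−1,1)∖{0}. For each edge e ∈ E define ρ_e* := max{|ρ_f| : f ∈ E, f ≠ e, f adjacent to e}. Then the approximate error exponent can be computed by a minimization over the d−1 edges alone: K̃(T,ρ) = min over e ∈ E of J̃(ρ_e, ρ_e·ρ_e*). -/

import Mathlib

noncomputable def Jt (a b : ℝ) : ℝ :=
  ((1 / 2) * Real.log ((1 - b ^ 2) / (1 - a ^ 2))) ^ 2 /
    (2 * (b ^ 4 + b ^ 2) / (1 - b ^ 2) ^ 2 + 2 * (a ^ 4 + a ^ 2) / (1 - a ^ 2) ^ 2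
      - 4 * b ^ 2 * (a ^ 2 + 1) / ((1 - b ^ 2) * (1 - a ^ 2)))

/-- The approximate error exponent K̃(G,ρ): the infimum of J̃(ρ_e, ρ_{e′}) over all
non-edges e′ = {u,v} and all edges e on the (unique) path joining u and v, where the
correlation of the non-edge is the product of the edge correlations along that path. -/
noncomputable def Ktilde {V : Type*} (G : SimpleGraph V) (ρ : Sym2 V → ℝ) : ℝ :=
  sInf { x : ℝ | ∃ (u v : V) (p : G.Walk u v), p.IsPath ∧ u ≠ v ∧ ¬ G.Adj u v ∧
    ∃ e ∈ p.edges, x = Jt (ρ e) ((p.edges.map ρ).prod) }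


section Helpers
open SimpleGraph
variable {V : Type*}

lemma Jt_congr {a b₁ b₂ : ℝ} (h : b₁ ^ 2 = b₂ ^ 2) : Jt a b₁ = Jt a b₂ := by
  simp only [Jt]
  rw [show b₁ ^ 4 = (b₁ ^ 2) ^ 2 by ring, show b₂ ^ 4 = (b₂ ^ 2) ^ 2 by ring, h]

noncomputable def fJ (c t : ℝ) : ℝ := (t * Real.log t) ^ 2 / ((t - 1) * (c * t - 2))

lemma hasDeriv_g1 {t : ℝ} (ht : 1 < t) :
    HasDerivAt (fun t : ℝ => t * Real.log t / (t - 1)) ((t - 1 - Real.log t) / (t - 1) ^ 2) t := by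
  have h0 : (0:ℝ) < t := by linarith
  have hnum : HasDerivAt (fun t : ℝ => t * Real.log t) (Real.log t + 1) t := by
    have := (hasDerivAt_id t).fun_mul (Real.hasDerivAt_log (ne_of_gt h0))
    convert this using 1
    all_goals first | rfl | simp [h0.ne']
  have hden : HasDerivAt (fun t : ℝ => t - 1) 1 t := (hasDerivAt_id t).sub_const 1
  have := hnum.fun_div hden (by intro h; linarith [sub_eq_zero.mp h] : t - 1 ≠ 0)
  convert this using 1
  all_goals first | rfl | skip
  field_simp
  ring

lemma hasDeriv_g2 {c t : ℝ} (hc : 2 ≤ c) (ht : 1 < t) :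
    HasDerivAt (fun t : ℝ => t * Real.log t / (c * t - 2))
      ((c * t - 2 - 2 * Real.log t) / (c * t - 2) ^ 2) t := by
  have h0 : (0:ℝ) < t := by linarith
  have hct : (0:ℝ) < c * t - 2 := by nlinarith
  have hnum : HasDerivAt (fun t : ℝ => t * Real.log t) (Real.log t + 1) t := by
    have := (hasDerivAt_id t).fun_mul (Real.hasDerivAt_log (ne_of_gt h0))
    convert this using 1
    all_goals first | rfl | simp [h0.ne']
  have hden : HasDerivAt (fun t : ℝ => c * t - 2) c t := by
    simpa using ((hasDerivAt_id t).const_mul c).sub_const 2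
  have := hnum.fun_div hden (ne_of_gt hct)
  convert this using 1
  all_goals first | rfl | skip
  field_simp
  ring

lemma g1_mono : MonotoneOn (fun t : ℝ => t * Real.log t / (t - 1)) (Set.Ioi 1) := by
  apply monotoneOn_of_deriv_nonneg (convex_Ioi 1)
  · intro x hx
    exact (hasDeriv_g1 hx).differentiableAt.continuousAt.continuousWithinAt
  · rw [interior_Ioi]
    intro x hx
    exact (hasDeriv_g1 hx).differentiableAt.differentiableWithinAt
  · rw [interior_Ioi]
    intro x hx
    rw [(hasDeriv_g1 hx).deriv]
    have hx1 : (1:ℝ) < x := hx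
    have h2 : 0 ≤ x - 1 - Real.log x := by
      have := Real.log_le_sub_one_of_pos (show (0:ℝ) < x by linarith)
      linarith
    positivity

lemma g2_mono {c : ℝ} (hc : 2 ≤ c) :
    MonotoneOn (fun t : ℝ => t * Real.log t / (c * t - 2)) (Set.Ioi 1) := by
  apply monotoneOn_of_deriv_nonneg (convex_Ioi 1)
  · intro x hx
    exact (hasDeriv_g2 hc hx).differentiableAt.continuousAt.continuousWithinAt
  · rw [interior_Ioi]
    intro x hx
    exact (hasDeriv_g2 hc hx).differentiableAt.differentiableWithinAt
  · rw [interior_Ioi]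
    intro x hx
    rw [(hasDeriv_g2 hc hx).deriv]
    have hx1 : (1:ℝ) < x := hx
    have h1 := Real.log_le_sub_one_of_pos (show (0:ℝ) < x by linarith)
    have h2 : 0 ≤ c * x - 2 - 2 * Real.log x := by nlinarith
    positivity

lemma fJ_eq_mul {c t : ℝ} : fJ c t = (t * Real.log t / (t - 1)) * (t * Real.log t / (c * t - 2)) := by
  rw [div_mul_div_comm, fJ, sq]

lemma g_nonneg {c t : ℝ} (hc : 2 ≤ c) (ht : 1 < t) :
    0 ≤ t * Real.log t / (t - 1) ∧ 0 ≤ t * Real.log t / (c * t - 2) := by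
  have h0 : (0:ℝ) < t := by linarith
  have hl : 0 ≤ Real.log t := Real.log_nonneg (le_of_lt ht)
  have h1 : (0:ℝ) < t - 1 := by linarith
  have h2 : (0:ℝ) < c * t - 2 := by nlinarith
  constructor <;> positivity

lemma fJ_mono {c s t : ℝ} (hc : 2 ≤ c) (hs : 1 < s) (hst : s ≤ t) : fJ c s ≤ fJ c t := by
  have ht : 1 < t := lt_of_lt_of_le hs hst
  rw [fJ_eq_mul, fJ_eq_mul]
  exact mul_le_mul (g1_mono hs ht hst) (g2_mono hc hs ht hst)
    (g_nonneg hc hs).2 (g_nonneg hc ht).1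

lemma key_eq (x y L : ℝ) (hx : 0 ≤ x) (hxy : x < y) (hy : y < 1) :
    ((1/2) * L) ^ 2 /
      (2 * (x ^ 2 + x) / (1 - x) ^ 2 + 2 * (y ^ 2 + y) / (1 - y) ^ 2
        - 4 * x * (y + 1) / ((1 - x) * (1 - y)))
    = (1 - y) ^ 2 / 8 *
      (((1 - x) / (1 - y) * L) ^ 2 /
        (((1 - x) / (1 - y) - 1) * ((3 - y) * ((1 - x) / (1 - y)) - 2))) := by
  have h1x : (0:ℝ) < 1 - x := by linarith
  have h1y : (0:ℝ) < 1 - y := by linarith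
  have hyx : (0:ℝ) < y - x := by linarith
  have hM : (0:ℝ) < 1 + y - 3 * x + x * y := by nlinarith
  have hB : 2 * (x ^ 2 + x) / (1 - x) ^ 2 + 2 * (y ^ 2 + y) / (1 - y) ^ 2
        - 4 * x * (y + 1) / ((1 - x) * (1 - y))
      = 2 * (y - x) * (1 + y - 3 * x + x * y) / ((1 - x) ^ 2 * (1 - y) ^ 2) := by
    field_simp
    ring
  have ht1 : (1 - x) / (1 - y) - 1 = (y - x) / (1 - y) := by
    field_simp
    ring
  have ht2 : (3 - y) * ((1 - x) / (1 - y)) - 2 = (1 + y - 3 * x + x * y) / (1 - y) := by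
    field_simp
    ring
  rw [hB, ht1, ht2]
  rw [div_div_eq_mul_div]
  field_simp
  ring

lemma Jt_eq {a b : ℝ} (ha : a ^ 2 < 1) (hb : b ^ 2 < a ^ 2) :
    Jt a b = (1 - a ^ 2) ^ 2 / 8 * fJ (3 - a ^ 2) ((1 - b ^ 2) / (1 - a ^ 2)) := by
  have hx : (0:ℝ) ≤ b ^ 2 := sq_nonneg b
  have := key_eq (b ^ 2) (a ^ 2) (Real.log ((1 - b ^ 2) / (1 - a ^ 2))) hx hb ha
  rw [Jt, fJ]
  convert this using 2 <;> ring

lemma t_gt_one {a b : ℝ} (ha : a ^ 2 < 1) (hb : b ^ 2 < a ^ 2) :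
    1 < (1 - b ^ 2) / (1 - a ^ 2) := by
  rw [lt_div_iff₀ (by linarith : (0:ℝ) < 1 - a ^ 2)]
  linarith

lemma Jt_nonneg {a b : ℝ} (ha : a ^ 2 < 1) (hb : b ^ 2 < a ^ 2) : 0 ≤ Jt a b := by
  rw [Jt_eq ha hb]
  have ht := t_gt_one ha hb
  set t := (1 - b ^ 2) / (1 - a ^ 2)
  have hc : (2:ℝ) ≤ 3 - a ^ 2 := by nlinarith [sq_nonneg a]
  have := g_nonneg hc ht
  rw [fJ_eq_mul]
  have h8 : (0:ℝ) ≤ (1 - a ^ 2) ^ 2 / 8 := by positivity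
  exact mul_nonneg h8 (mul_nonneg this.1 this.2)

lemma Jt_anti {a b₁ b₂ : ℝ} (ha : a ^ 2 < 1) (h1 : b₁ ^ 2 < a ^ 2) (h2 : b₂ ^ 2 ≤ b₁ ^ 2) :
    Jt a b₁ ≤ Jt a b₂ := by
  have h2' : b₂ ^ 2 < a ^ 2 := lt_of_le_of_lt h2 h1
  rw [Jt_eq ha h1, Jt_eq ha h2']
  have hc : (2:ℝ) ≤ 3 - a ^ 2 := by nlinarith [sq_nonneg a]
  have hd : (0:ℝ) < 1 - a ^ 2 := by linarith
  apply mul_le_mul_of_nonneg_left _ (by positivity)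
  apply fJ_mono hc (t_gt_one ha h1)
  gcongr

lemma abs_prod_le_one (l : List ℝ) (h : ∀ a ∈ l, |a| ≤ 1) : |l.prod| ≤ 1 := by
  induction l with
  | nil => simp
  | cons a t ih =>
    rw [List.prod_cons, abs_mul]
    have h1 := h a (List.mem_cons_self)
    have h2 := ih (fun b hb => h b (List.mem_cons_of_mem a hb))
    calc |a| * |t.prod| ≤ 1 * 1 := by
          apply mul_le_mul h1 h2 (abs_nonneg _) zero_le_one
      _ = 1 := by ring

lemma prod_extract (ρ : Sym2 V → ℝ) (l : List (Sym2 V)) {e f : Sym2 V}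
    (he : e ∈ l) (hef : f ≠ e) (hf : f ∈ l) (hb : ∀ g ∈ l, |ρ g| ≤ 1) :
    |(l.map ρ).prod| ≤ |ρ e| * |ρ f| := by
  classical
  have p1 : l.Perm (e :: l.erase e) := List.perm_cons_erase he
  have hf' : f ∈ l.erase e := (List.mem_erase_of_ne hef).mpr hf
  have p2 : (l.erase e).Perm (f :: (l.erase e).erase f) := List.perm_cons_erase hf'
  have : (l.map ρ).prod = ρ e * (ρ f * (((l.erase e).erase f).map ρ).prod) := by
    rw [(p1.map ρ).prod_eq, List.map_cons, List.prod_cons,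
      (p2.map ρ).prod_eq, List.map_cons, List.prod_cons]
  rw [this, abs_mul, abs_mul]
  have hrest : |(((l.erase e).erase f).map ρ).prod| ≤ 1 := by
    apply abs_prod_le_one
    intro a ha
    obtain ⟨g, hg, rfl⟩ := List.mem_map.mp ha
    exact hb g (List.erase_subset (List.erase_subset hg))
  calc |ρ e| * (|ρ f| * |(((l.erase e).erase f).map ρ).prod|)
      ≤ |ρ e| * (|ρ f| * 1) := by
        apply mul_le_mul_of_nonneg_left _ (abs_nonneg _)
        exact mul_le_mul_of_nonneg_left hrest (abs_nonneg _)
    _ = |ρ e| * |ρ f| := by ring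

lemma two_le_length_walk {G : SimpleGraph V} {u v : V} (p : G.Walk u v)
    (hne : u ≠ v) (hna : ¬ G.Adj u v) : 2 ≤ p.length := by
  cases p with
  | nil => exact absurd rfl hne
  | cons h q =>
    cases q with
    | nil => exact absurd h hna
    | cons h' r => simp [Walk.length_cons]

lemma exists_adj_in_walk {G : SimpleGraph V} :
    ∀ {u v : V} (p : G.Walk u v), p.support.Nodup → 2 ≤ p.length →
      ∀ e ∈ p.edges, ∃ f ∈ p.edges, f ≠ e ∧ ∃ w, w ∈ e ∧ w ∈ f := by
  intro u v p
  induction p with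
  | nil => intro _ hl; simp at hl
  | @cons u b v h q ih =>
    intro hnd hl e he
    have hnd' : q.support.Nodup := by
      rw [Walk.support_cons] at hnd; exact hnd.of_cons
    have hu : u ∉ q.support := by
      rw [Walk.support_cons] at hnd; exact (List.nodup_cons.mp hnd).1
    rw [Walk.edges_cons] at he
    rcases List.mem_cons.mp he with heq | hq
    · -- e is the first edge s(u,b)
      cases q with
      | nil => simp [Walk.length_cons] at hl
      | @cons b c v h' r =>
        refine ⟨s(b, c), ?_, ?_, b, ?_, ?_⟩
        · rw [Walk.edges_cons, Walk.edges_cons]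
          exact List.mem_cons_of_mem _ (List.mem_cons_self)
        · intro hfe
          rw [heq] at hfe
          have hub : u ≠ b := h.ne
          have huc : u ≠ c := by
            intro hc
            apply hu
            rw [Walk.support_cons, hc]
            exact List.mem_cons_of_mem _ r.start_mem_support
          rw [Sym2.eq_iff] at hfe
          rcases hfe with ⟨h1, h2⟩ | ⟨h1, h2⟩
          · exact hub h1.symm
          · exact huc h2.symm
        · rw [heq]; exact Sym2.mem_mk_right u b
        · exact Sym2.mem_mk_left b c
    · -- e ∈ q.edges
      by_cases hql : 2 ≤ q.length
      · obtain ⟨f, hf, hfe, w, hw1, hw2⟩ := ih hnd' hql e hq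
        exact ⟨f, by rw [Walk.edges_cons]; exact List.mem_cons_of_mem _ hf, hfe, w, hw1, hw2⟩
      · -- q has exactly one edge, e = that edge, take first edge of p
        cases q with
        | nil => simp at hq
        | @cons b c v h' r =>
          cases r with
          | cons h'' r' => simp [Walk.length_cons] at hql
          | nil =>
            -- q = cons h' nil : Walk b v with c = v, e = s(b,v)
            have heq : e = s(b, v) := by simpa using hq
            refine ⟨s(u, b), ?_, ?_, b, ?_, ?_⟩
            · rw [Walk.edges_cons]; exact List.mem_cons_self
            · intro hfe
              rw [heq] at hfe
              have hub : u ≠ b := h.ne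
              have huc : u ≠ v := by
                intro hc
                apply hu
                rw [hc]
                exact Walk.end_mem_support _
              rw [Sym2.eq_iff] at hfe
              rcases hfe with ⟨h1, h2⟩ | ⟨h1, h2⟩
              · exact hub h1
              · exact huc h1
            · rw [heq]; exact Sym2.mem_mk_left b v
            · exact Sym2.mem_mk_right u b

lemma adj_edge_exists {G : SimpleGraph V} [Fintype V] (hd : 3 ≤ Fintype.card V)
    (hc : G.Connected) {e : Sym2 V} (he : e ∈ G.edgeSet) :
    ∃ f ∈ G.edgeSet, f ≠ e ∧ ∃ w, w ∈ e ∧ w ∈ f := by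
  classical
  induction e using Sym2.ind with
  | _ u v =>
  rw [mem_edgeSet] at he
  have huv : u ≠ v := he.ne
  -- third vertex
  have hsub : ¬ (Finset.univ : Finset V) ⊆ {u, v} := by
    intro hsub
    have h1 := Finset.card_le_card hsub
    have h2 : ({u, v} : Finset V).card ≤ 2 := Finset.card_le_two
    rw [Finset.card_univ] at h1
    omega
  obtain ⟨w0, -, hw0⟩ := Finset.not_subset.mp hsub
  simp only [Finset.mem_insert, Finset.mem_singleton, not_or] at hw0
  obtain ⟨hw0u, hw0v⟩ := hw0
  obtain ⟨p0⟩ := hc.preconnected u w0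
  obtain ⟨p, hpath⟩ := p0.toPath
  clear p0
  cases p with
  | nil => exact absurd rfl (Ne.symm hw0u)
  | @cons _ z _ h1 q =>
    by_cases hz : z = v
    · subst hz
      cases q with
      | nil => exact absurd rfl (Ne.symm hw0v)
      | @cons _ z' _ h2 r =>
        have hu : u ∉ (Walk.cons h2 r).support := by
          have := hpath.support_nodup
          rw [Walk.support_cons] at this
          exact (List.nodup_cons.mp this).1
        have hz'u : z' ≠ u := by
          intro hzu
          apply hu
          rw [Walk.support_cons, ← hzu]
          exact List.mem_cons_of_mem _ r.start_mem_support
        refine ⟨s(z, z'), (G.mem_edgeSet).mpr h2, ?_, z, Sym2.mem_mk_right u z, Sym2.mem_mk_left z z'⟩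
        intro hfe
        rw [Sym2.eq_iff] at hfe
        rcases hfe with ⟨ha, hb⟩ | ⟨ha, hb⟩
        · exact huv ha.symm
        · exact hz'u hb
    · refine ⟨s(u, z), (G.mem_edgeSet).mpr h1, ?_, u, Sym2.mem_mk_left u v, Sym2.mem_mk_left u z⟩
      intro hfe
      rw [Sym2.eq_iff] at hfe
      rcases hfe with ⟨ha, hb⟩ | ⟨ha, hb⟩
      · exact hz hb
      · exact huv ha

lemma not_adj_of_two_path {G : SimpleGraph V} (hac : G.IsAcyclic) {a b c : V}
    (h1 : G.Adj a b) (h2 : G.Adj b c) (hac2 : a ≠ c) : ¬ G.Adj a c := by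
  intro hadj
  have hp : (Walk.cons h1 (Walk.cons h2 Walk.nil)).IsPath := by
    rw [Walk.cons_isPath_iff]
    refine ⟨?_, ?_⟩
    · rw [Walk.cons_isPath_iff]
      refine ⟨Walk.IsPath.nil, ?_⟩
      simp [h2.ne]
    · simp [h1.ne, hac2]
  have huniq := isAcyclic_iff_path_unique.mp hac ⟨_, hp⟩ (SimpleGraph.Path.singleton hadj)
  have := congrArg (fun q : G.Path a c => q.1.length) huniq
  simp [SimpleGraph.Path.singleton] at this

lemma sSup_facts {G : SimpleGraph V} [Fintype V] (hd : 3 ≤ Fintype.card V)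
    (hc : G.Connected) (ρ : Sym2 V → ℝ)
    (hρ : ∀ e ∈ G.edgeSet, ρ e ∈ Set.Ioo (-1 : ℝ) 1 ∧ ρ e ≠ 0) {e : Sym2 V}
    (he : e ∈ G.edgeSet) :
    (0 < sSup { y : ℝ | ∃ f ∈ G.edgeSet, f ≠ e ∧ (∃ v : V, v ∈ e ∧ v ∈ f) ∧ y = |ρ f| } ∧
     sSup { y : ℝ | ∃ f ∈ G.edgeSet, f ≠ e ∧ (∃ v : V, v ∈ e ∧ v ∈ f) ∧ y = |ρ f| } < 1) ∧
    (∃ f₁ ∈ G.edgeSet, f₁ ≠ e ∧ (∃ w, w ∈ e ∧ w ∈ f₁) ∧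
      sSup { y : ℝ | ∃ f ∈ G.edgeSet, f ≠ e ∧ (∃ v : V, v ∈ e ∧ v ∈ f) ∧ y = |ρ f| } = |ρ f₁|) ∧
    BddAbove { y : ℝ | ∃ f ∈ G.edgeSet, f ≠ e ∧ (∃ v : V, v ∈ e ∧ v ∈ f) ∧ y = |ρ f| } := by
  classical
  set A := { y : ℝ | ∃ f ∈ G.edgeSet, f ≠ e ∧ (∃ v : V, v ∈ e ∧ v ∈ f) ∧ y = |ρ f| } with hA
  have hfin : A.Finite := by
    apply Set.Finite.subset ((G.edgeSet.toFinite).image (fun f => |ρ f|))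
    rintro y ⟨f, hf, -, -, rfl⟩
    exact ⟨f, hf, rfl⟩
  have hne : A.Nonempty := by
    obtain ⟨f, hf, hfe, w, hw⟩ := adj_edge_exists hd hc he
    exact ⟨|ρ f|, f, hf, hfe, ⟨w, hw⟩, rfl⟩
  have hmem : sSup A ∈ A := Set.Nonempty.csSup_mem hne hfin
  obtain ⟨f₁, hf₁, hf₁e, hw, hval⟩ := hmem
  refine ⟨⟨?_, ?_⟩, ⟨f₁, hf₁, hf₁e, hw, hval⟩, hfin.bddAbove⟩
  · rw [hval]
    exact abs_pos.mpr (hρ f₁ hf₁).2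
  · rw [hval]
    exact abs_lt.mpr ⟨(hρ f₁ hf₁).1.1, (hρ f₁ hf₁).1.2⟩

end Helpers

/-- The approximate error exponent can be computed in linear time: it is the minimum over
the edges e of J̃(ρ_e, ρ_e·ρ_e*), where ρ_e* is the maximum of |ρ_f| over the edges f
adjacent to e. -/
theorem Ktilde_linear_time {V : Type*} [Fintype V] (hd : 3 ≤ Fintype.card V)
    (G : SimpleGraph V) (hG : G.IsTree) (ρ : Sym2 V → ℝ)
    (hρ : ∀ e ∈ G.edgeSet, ρ e ∈ Set.Ioo (-1 : ℝ) 1 ∧ ρ e ≠ 0) :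
    Ktilde G ρ = sInf { x : ℝ | ∃ e ∈ G.edgeSet,
      x = Jt (ρ e) (ρ e *
        sSup { y : ℝ | ∃ f ∈ G.edgeSet, f ≠ e ∧ (∃ v : V, v ∈ e ∧ v ∈ f) ∧ y = |ρ f| }) } := by
  classical
  have hconn := hG.isConnected
  have hacyc := hG.IsAcyclic
  have habs : ∀ g ∈ G.edgeSet, |ρ g| < 1 := fun g hg =>
    abs_lt.mpr ⟨(hρ g hg).1.1, (hρ g hg).1.2⟩
  have hne0 : ∀ g ∈ G.edgeSet, ρ g ≠ 0 := fun g hg => (hρ g hg).2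
  have ha2 : ∀ g ∈ G.edgeSet, (ρ g) ^ 2 < 1 := by
    intro g hg
    have h := habs g hg
    have h2 := abs_nonneg (ρ g)
    nlinarith [sq_abs (ρ g)]
  rw [Ktilde]
  set S₁ := { x : ℝ | ∃ (u v : V) (p : G.Walk u v), p.IsPath ∧ u ≠ v ∧ ¬ G.Adj u v ∧
    ∃ e ∈ p.edges, x = Jt (ρ e) ((p.edges.map ρ).prod) } with hS₁
  set S₂ := { x : ℝ | ∃ e ∈ G.edgeSet, x = Jt (ρ e) (ρ e *
      sSup { y : ℝ | ∃ f ∈ G.edgeSet, f ≠ e ∧ (∃ v : V, v ∈ e ∧ v ∈ f) ∧ y = |ρ f| }) } with hS₂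
  have claimC : ∀ z ∈ S₂, 0 ≤ z := by
    rintro z ⟨e, he, rfl⟩
    obtain ⟨⟨hm0, hm1⟩, -, -⟩ := sSup_facts hd hconn ρ hρ he
    set m := sSup { y : ℝ | ∃ f ∈ G.edgeSet, f ≠ e ∧ (∃ v : V, v ∈ e ∧ v ∈ f) ∧ y = |ρ f| }
    have h2 : (0:ℝ) < (ρ e) ^ 2 := pow_two_pos_of_ne_zero (hne0 e he)
    have hm2 : m ^ 2 < 1 := by nlinarith
    have hb : (ρ e * m) ^ 2 < (ρ e) ^ 2 := by nlinarith
    exact Jt_nonneg (ha2 e he) hb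
  have claimB : ∀ x ∈ S₁, ∃ z ∈ S₂, z ≤ x := by
    rintro x ⟨u, v, p, hp, huv, hna, e, he, rfl⟩
    have heE : e ∈ G.edgeSet := p.edges_subset_edgeSet he
    have hl := two_le_length_walk p huv hna
    obtain ⟨f, hf, hfe, w, hwe, hwf⟩ := exists_adj_in_walk p hp.support_nodup hl e he
    have hfE : f ∈ G.edgeSet := p.edges_subset_edgeSet hf
    obtain ⟨⟨hm0, hm1⟩, -, hbddA⟩ := sSup_facts hd hconn ρ hρ heE
    refine ⟨Jt (ρ e) (ρ e *
      sSup { y : ℝ | ∃ f ∈ G.edgeSet, f ≠ e ∧ (∃ v : V, v ∈ e ∧ v ∈ f) ∧ y = |ρ f| }),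
      ⟨e, heE, rfl⟩, ?_⟩
    set m := sSup { y : ℝ | ∃ f ∈ G.edgeSet, f ≠ e ∧ (∃ v : V, v ∈ e ∧ v ∈ f) ∧ y = |ρ f| }
    have hfm : |ρ f| ≤ m := le_csSup hbddA ⟨f, hfE, hfe, ⟨w, hwe, hwf⟩, rfl⟩
    have h2 : (0:ℝ) < (ρ e) ^ 2 := pow_two_pos_of_ne_zero (hne0 e heE)
    have hm2 : m ^ 2 < 1 := by nlinarith
    have hb1 : (ρ e * m) ^ 2 < (ρ e) ^ 2 := by nlinarith
    have hPabs : |(p.edges.map ρ).prod| ≤ |ρ e| * m := by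
      calc |(p.edges.map ρ).prod| ≤ |ρ e| * |ρ f| :=
            prod_extract ρ p.edges he hfe hf
              (fun g hg => (habs g (p.edges_subset_edgeSet hg)).le)
        _ ≤ |ρ e| * m := mul_le_mul_of_nonneg_left hfm (abs_nonneg _)
    have hb2 : ((p.edges.map ρ).prod) ^ 2 ≤ (ρ e * m) ^ 2 := by
      have h3 : (|ρ e| * m) ^ 2 = (ρ e * m) ^ 2 := by rw [mul_pow, mul_pow, sq_abs]
      calc ((p.edges.map ρ).prod) ^ 2 = |(p.edges.map ρ).prod| ^ 2 := (sq_abs _).symm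
        _ ≤ (|ρ e| * m) ^ 2 := pow_le_pow_left₀ (abs_nonneg _) hPabs 2
        _ = (ρ e * m) ^ 2 := h3
    exact Jt_anti (ha2 e heE) hb1 hb2
  have claimA : S₂ ⊆ S₁ := by
    rintro z ⟨e, he, rfl⟩
    obtain ⟨⟨hm0, hm1⟩, ⟨f₁, hf₁E, hf₁e, ⟨w, hwe, hwf⟩, hval⟩, -⟩ :=
      sSup_facts hd hconn ρ hρ he
    set m := sSup { y : ℝ | ∃ f ∈ G.edgeSet, f ≠ e ∧ (∃ v : V, v ∈ e ∧ v ∈ f) ∧ y = |ρ f| }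
    obtain ⟨u₀, heq⟩ := Sym2.mem_iff_exists.mp hwe
    obtain ⟨v₀, hfq⟩ := Sym2.mem_iff_exists.mp hwf
    have h1 : G.Adj w u₀ := G.mem_edgeSet.mp (heq ▸ he)
    have h2 : G.Adj w v₀ := G.mem_edgeSet.mp (hfq ▸ hf₁E)
    have huv : u₀ ≠ v₀ := by
      intro h
      apply hf₁e
      rw [hfq, heq, h]
    have hna : ¬ G.Adj u₀ v₀ := not_adj_of_two_path hacyc h1.symm h2 huv
    refine ⟨u₀, v₀, SimpleGraph.Walk.cons h1.symm (SimpleGraph.Walk.cons h2 SimpleGraph.Walk.nil),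
      ?_, huv, hna, e, ?_, ?_⟩
    · rw [SimpleGraph.Walk.cons_isPath_iff]
      refine ⟨?_, ?_⟩
      · rw [SimpleGraph.Walk.cons_isPath_iff]
        exact ⟨SimpleGraph.Walk.IsPath.nil, by simp [h2.ne]⟩
      · simp [h1.ne', huv]
    · simp only [SimpleGraph.Walk.edges_cons, SimpleGraph.Walk.edges_nil]
      rw [heq, show s(w, u₀) = s(u₀, w) from Sym2.eq_swap]
      exact List.mem_cons_self
    · have hedges : (((SimpleGraph.Walk.cons h1.symm
          (SimpleGraph.Walk.cons h2 SimpleGraph.Walk.nil)).edges).map ρ).prod = ρ e * ρ f₁ := by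
        simp only [SimpleGraph.Walk.edges_cons, SimpleGraph.Walk.edges_nil, List.map_cons,
          List.map_nil, List.prod_cons, List.prod_nil]
        rw [heq, hfq, show s(u₀, w) = s(w, u₀) from Sym2.eq_swap]
        ring
      rw [hedges]
      apply Jt_congr
      rw [hval, mul_pow, mul_pow, sq_abs]
  have hS2ne : S₂.Nonempty := by
    have hnt : Nontrivial V := Fintype.one_lt_card_iff_nontrivial.mp (by omega)
    obtain ⟨a, b, hab⟩ := exists_pair_ne V
    obtain ⟨p0⟩ := hconn.preconnected a b
    cases p0 with
    | nil => exact absurd rfl hab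
    | cons h q => exact ⟨_, ⟨_, G.mem_edgeSet.mpr h, rfl⟩⟩
  have h0 : ∀ x ∈ S₁, 0 ≤ x := by
    intro x hx
    obtain ⟨z, hz, hzx⟩ := claimB x hx
    exact le_trans (claimC z hz) hzx
  have hbdd1 : BddBelow S₁ := ⟨0, h0⟩
  have hbdd2 : BddBelow S₂ := ⟨0, claimC⟩
  obtain ⟨z0, hz0⟩ := hS2ne
  have hS1ne : S₁.Nonempty := ⟨z0, claimA hz0⟩
  apply le_antisymm
  · exact csInf_le_csInf hbdd1 ⟨z0, hz0⟩ claimA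
  · apply le_csInf hS1ne
    intro x hx
    obtain ⟨z, hz, hzx⟩ := claimB x hx
    exact le_trans (csInf_le hbdd2 hz) hzx
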